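/- Let G be a graph and suppose I(G) = U + V where U and V are edge ideals of subgraphs with 2-linear resolutions generated in degree 2, and U ∩ V ⊆ m·U and U ∩ V ⊆ m·V where m is the graded maximal ideal. Then the decomposition I(G) = U + V is a Betti splitting, i.e., β_{i,j}(I(G)) = β_{i,j}(U) + β_{i,j}(V) + β_{i-1,j}(U ∩ V) for all i, j. -/

import Mathlib

open MvPolynomial

noncomputable section

namespace CMReg

variable {k : Type*} [Field k] {σ : Type*} [Fintype σ] [DecidableEq σ] [LinearOrder σ]

/-- The degree-`d` homogeneous component of an ideal `I` of `k[x_s : s ∈ σ]`, as a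
`k`-vector space (`⊥` for negative `d`). -/
def degComp (I : Ideal (MvPolynomial σ k)) (d : ℤ) : Submodule k (MvPolynomial σ k) :=
  if 0 ≤ d then I.restrictScalars k ⊓ homogeneousSubmodule σ k d.toNat else ⊥

lemma mulX_mem (I : Ideal (MvPolynomial σ k)) (a : σ) (d : ℤ) (m : MvPolynomial σ k)
    (hm : m ∈ degComp I d) : X a * m ∈ degComp I (d + 1) := by
  unfold degComp at *
  split_ifs at hm with h
  · rw [if_pos (by omega)]
    rw [Submodule.mem_inf] at hm
    obtain ⟨h1, h2⟩ := hm
    rw [Submodule.mem_inf]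
    refine ⟨I.mul_mem_left _ h1, ?_⟩
    rw [mem_homogeneousSubmodule] at h2 ⊢
    have e : (d + 1).toNat = 1 + d.toNat := by omega
    rw [e]
    exact (isHomogeneous_X k a).mul h2
  · simp only [Submodule.mem_bot] at hm
    subst hm
    rw [mul_zero]
    exact zero_mem _

/-- The internal-degree-`j` strand of the Koszul complex `K(x₁,...,xₙ) ⊗ I` in homological
degree `i`: a direct sum of copies of the degree-`(j - i)` component of `I`, indexed by the
`i`-element subsets of the variables (the basis of `Λⁱ`). -/
abbrev KD (I : Ideal (MvPolynomial σ k)) (i j : ℕ) : Type _ :=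
  {S : Finset σ // S.card = i} → degComp I ((j : ℤ) - i)

/-- The Koszul differential `K_{i+1} → K_i` in internal degree `j`:
`(d f)(S) = ∑_{a ∉ S} (-1)^{|{b ∈ S : b < a}|} xₐ · f(S ∪ {a})`. -/
def kdiff (I : Ideal (MvPolynomial σ k)) (i j : ℕ) : KD I (i + 1) j →ₗ[k] KD I i j where
  toFun f S := ∑ a ∈ S.1ᶜ.attach,
    ((-1 : k) ^ (S.1.filter (fun b => b < a.1)).card) •
      (⟨X a.1 * (f ⟨insert a.1 S.1, by
          rw [Finset.card_insert_of_notMem (Finset.mem_compl.mp a.2), S.2]⟩ : _).1, by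
        have h := mulX_mem I a.1 _ _ (f ⟨insert a.1 S.1, by
          rw [Finset.card_insert_of_notMem (Finset.mem_compl.mp a.2), S.2]⟩).2
        rwa [show ((j : ℤ) - (i + 1 : ℕ)) + 1 = (j : ℤ) - i by push_cast; ring] at h⟩ :
        degComp I ((j : ℤ) - i))
  map_add' f g := by
    funext S
    rw [Pi.add_apply, ← Finset.sum_add_distrib]
    refine Finset.sum_congr rfl (fun a _ => ?_)
    rw [← smul_add]
    congr 1
    apply Subtype.ext
    simp [mul_add]
  map_smul' c f := by
    funext S
    rw [RingHom.id_apply, Pi.smul_apply, Finset.smul_sum]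
    refine Finset.sum_congr rfl (fun a _ => ?_)
    rw [smul_comm]
    congr 1
    apply Subtype.ext
    simp [mul_smul_comm]

/-- The cycles of the degree-`j` strand of the Koszul complex at homological degree `i`. -/
def cyclesAt (I : Ideal (MvPolynomial σ k)) (i j : ℕ) : Submodule k (KD I i j) :=
  match i with
  | 0 => ⊤
  | (i' + 1) => LinearMap.ker (kdiff I i' j)

/-- The graded Betti number `β_{ij}(I) = dim_k Tor_i(k, I)_j`, computed as the dimension of
the homology of the degree-`j` strand of `K(x) ⊗ I` at homological degree `i`. -/
def bettiNum (I : Ideal (MvPolynomial σ k)) (i j : ℕ) : ℕ :=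
  Module.finrank k (cyclesAt I i j) - Module.finrank k (LinearMap.range (kdiff I i j))

/-- The Castelnuovo–Mumford regularity `reg I = sup { j - i : β_{ij}(I) ≠ 0 }` of an ideal
of the polynomial ring, as an element of `ℕ∞`. -/
def reg (I : Ideal (MvPolynomial σ k)) : ℕ∞ :=
  sSup {d : ℕ∞ | ∃ i j : ℕ, bettiNum I i j ≠ 0 ∧ ((j - i : ℕ) : ℕ∞) = d}

end CMReg

namespace CMRegAux

section LinAlg
variable {K : Type*} [Field K] {M N : Type*} [AddCommGroup M] [Module K M]
  [AddCommGroup N] [Module K N]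

lemma finrank_map_add_inf_ker [FiniteDimensional K M] (f : M →ₗ[K] N) (p : Submodule K M) :
    Module.finrank K (p.map f) + Module.finrank K ↥(p ⊓ LinearMap.ker f) =
      Module.finrank K p := by
  have h := LinearMap.finrank_range_add_finrank_ker (f.domRestrict p)
  rw [LinearMap.range_domRestrict, LinearMap.ker_domRestrict] at h
  rw [← h]
  congr 1
  rw [← Submodule.finrank_map_subtype_eq p ((LinearMap.ker f).comap p.subtype),
    Submodule.map_comap_subtype]

lemma finrank_map_of_injective [FiniteDimensional K M] (f : M →ₗ[K] N)
    (hf : Function.Injective f) (p : Submodule K M) :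
    Module.finrank K (p.map f) = Module.finrank K p := by
  have h := finrank_map_add_inf_ker f p
  rw [LinearMap.ker_eq_bot.mpr hf, inf_bot_eq] at h
  simpa using h

lemma finrank_range_of_injective [FiniteDimensional K M] (f : M →ₗ[K] N)
    (hf : Function.Injective f) :
    Module.finrank K (LinearMap.range f) = Module.finrank K M := by
  have h := LinearMap.finrank_range_add_finrank_ker f
  rw [LinearMap.ker_eq_bot.mpr hf] at h
  simpa using h

/-- equivalence between a product submodule and the product of submodules -/
def prodEquivSub (p : Submodule K M) (q : Submodule K N) : ↥(p.prod q) ≃ₗ[K] ↥p × ↥q where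
  toFun x := (⟨x.1.1, x.2.1⟩, ⟨x.1.2, x.2.2⟩)
  invFun y := ⟨(y.1.1, y.2.1), ⟨y.1.2, y.2.2⟩⟩
  map_add' x y := rfl
  map_smul' c x := rfl
  left_inv x := rfl
  right_inv y := rfl

lemma finrank_prod_sub [FiniteDimensional K M] [FiniteDimensional K N]
    (p : Submodule K M) (q : Submodule K N) :
    Module.finrank K ↥(p.prod q) = Module.finrank K p + Module.finrank K q := by
  rw [LinearEquiv.finrank_eq (prodEquivSub p q), Module.finrank_prod]

lemma range_prodMap {M₂ N₂ : Type*} [AddCommGroup M₂] [Module K M₂] [AddCommGroup N₂]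
    [Module K N₂] (f : M →ₗ[K] M₂) (g : N →ₗ[K] N₂) :
    LinearMap.range (f.prodMap g) = (LinearMap.range f).prod (LinearMap.range g) := by
  ext ⟨a, b⟩
  constructor
  · rintro ⟨⟨x, y⟩, h⟩
    exact ⟨⟨x, by simpa using congrArg Prod.fst h⟩, ⟨y, by simpa using congrArg Prod.snd h⟩⟩
  · rintro ⟨⟨x, rfl⟩, ⟨y, rfl⟩⟩
    exact ⟨(x, y), rfl⟩

end LinAlg

section HomogFD
variable {k : Type*} [Field k] {σ : Type*} [Fintype σ]

instance homogeneousSubmodule_fd (n : ℕ) :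
    FiniteDimensional k (homogeneousSubmodule σ k n) := by
  classical
  haveI hfin : FiniteDimensional k (Submodule.span k
      (Set.range (fun d : σ → Fin (n+1) =>
        (monomial (Finsupp.equivFunOnFinite.symm fun s => (d s : ℕ)) (1:k))))) :=
    FiniteDimensional.span_of_finite k (Set.finite_range _)
  refine Submodule.finiteDimensional_of_le (S₂ := Submodule.span k
      (Set.range (fun d : σ → Fin (n+1) =>
        (monomial (Finsupp.equivFunOnFinite.symm fun s => (d s : ℕ)) (1:k))))) (fun p hp => ?_)
  rw [mem_homogeneousSubmodule] at hp
  rw [← p.support_sum_monomial_coeff]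
  refine Submodule.sum_mem _ fun d hd => ?_
  have hdeg : d.degree = n := by
    by_contra hne
    exact mem_support_iff.mp hd (hp.coeff_eq_zero hne)
  have hle : ∀ s, d s ≤ n := fun s => hdeg ▸ Finsupp.le_degree s d
  have : monomial d (coeff d p) = coeff d p • monomial d (1:k) := by
    rw [smul_monomial, smul_eq_mul, mul_one]
  rw [this]
  refine Submodule.smul_mem _ _ (Submodule.subset_span ⟨fun s => ⟨d s, Nat.lt_succ_of_le (hle s)⟩, ?_⟩)
  show monomial (Finsupp.equivFunOnFinite.symm fun s => ((d s : ℕ))) (1:k) = monomial d 1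
  rw [show (fun s => ((d s : ℕ))) = ⇑d from rfl, Finsupp.equivFunOnFinite_symm_coe]

end HomogFD
end CMRegAux

namespace CMReg

variable {k : Type*} [Field k] {σ : Type*} [Fintype σ] [DecidableEq σ] [LinearOrder σ]

open CMRegAux

lemma degComp_mono {I J : Ideal (MvPolynomial σ k)} (h : I ≤ J) (d : ℤ) :
    degComp I d ≤ degComp J d := by
  unfold degComp
  split_ifs
  · exact inf_le_inf_right _ (fun x hx => h hx)
  · exact le_rfl

lemma degComp_inf (I J : Ideal (MvPolynomial σ k)) (d : ℤ) :
    degComp (I ⊓ J) d = degComp I d ⊓ degComp J d := by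
  unfold degComp
  split_ifs
  · ext x
    simp only [Submodule.mem_inf, Submodule.restrictScalars_mem, Ideal.mem_inf]
    tauto
  · simp

lemma degree_add' (a b : σ →₀ ℕ) : (a + b).degree = a.degree + b.degree := by
  simp only [Finsupp.degree_eq_weight_one]
  exact map_add _ a b

lemma degree_single' (s : σ) (n : ℕ) : (Finsupp.single s n).degree = n := by
  classical
  rcases eq_or_ne n 0 with rfl | h
  · simp [map_zero]
  · rw [Finsupp.degree_apply, Finsupp.support_single_ne_zero _ h, Finset.sum_singleton,
      Finsupp.single_eq_same]

instance degComp_fd (I : Ideal (MvPolynomial σ k)) (d : ℤ) :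
    FiniteDimensional k (degComp I d) := by
  rcases le_or_gt 0 d with h | h
  · rw [show degComp I d = I.restrictScalars k ⊓ homogeneousSubmodule σ k d.toNat from if_pos h]
    exact Submodule.finiteDimensional_of_le (S₂ := homogeneousSubmodule σ k d.toNat) inf_le_right
  · rw [show degComp I d = ⊥ from if_neg (not_le.mpr h)]
    infer_instance

instance KD_fd (I : Ideal (MvPolynomial σ k)) (i j : ℕ) : FiniteDimensional k (KD I i j) := by
  unfold KD
  infer_instance

/-- The ideal of polynomials all of whose coefficients in degree `< n` vanish. -/
def lowIdeal (n : ℕ) : Ideal (MvPolynomial σ k) where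
  carrier := {p | ∀ m : σ →₀ ℕ, m.degree < n → coeff m p = 0}
  add_mem' := fun ha hb m hm => by rw [coeff_add, ha m hm, hb m hm, add_zero]
  zero_mem' := fun m _ => by rw [coeff_zero]
  smul_mem' := fun c p hp m hm => by
    rw [smul_eq_mul, coeff_mul]
    refine Finset.sum_eq_zero fun x hx => ?_
    have hd : x.2.degree ≤ m.degree := by
      rw [← Finset.HasAntidiagonal.mem_antidiagonal.mp hx, CMReg.degree_add' _ _]
      exact le_add_self
    rw [hp x.2 (lt_of_le_of_lt hd hm), mul_zero]

lemma mem_lowIdeal {n : ℕ} {p : MvPolynomial σ k} :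
    p ∈ (lowIdeal n : Ideal (MvPolynomial σ k)) ↔
      ∀ m : σ →₀ ℕ, m.degree < n → coeff m p = 0 := Iff.rfl

lemma lowIdeal_mul_le (a b : ℕ) :
    (lowIdeal a : Ideal (MvPolynomial σ k)) * lowIdeal b ≤ lowIdeal (a + b) := by
  rw [Ideal.mul_le]
  intro p hp q hq
  intro m hm
  rw [coeff_mul]
  refine Finset.sum_eq_zero fun x hx => ?_
  have hsum : x.1.degree + x.2.degree < a + b := by
    rw [← CMReg.degree_add' _ _, Finset.HasAntidiagonal.mem_antidiagonal.mp hx]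
    exact hm
  rcases lt_or_ge x.1.degree a with h | h
  · rw [hp x.1 h, zero_mul]
  · rw [hq x.2 (by omega), mul_zero]

lemma span_X_le_lowIdeal :
    Ideal.span (Set.range (X : σ → MvPolynomial σ k)) ≤ lowIdeal 1 := by
  rw [Ideal.span_le]
  rintro _ ⟨s, rfl⟩
  intro m hm
  rw [coeff_X']
  split_ifs with h
  · subst h
    rw [CMReg.degree_single'] at hm
    omega
  · rfl

lemma degComp_eq_bot_of_low {I : Ideal (MvPolynomial σ k)} {n : ℕ}
    (h : I ≤ lowIdeal n) {d : ℤ} (hd : d < n) : degComp I d = ⊥ := by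
  unfold degComp
  split_ifs with h0
  · rw [Submodule.eq_bot_iff]
    rintro p hp
    obtain ⟨hpI, hph⟩ := Submodule.mem_inf.mp hp
    rw [mem_homogeneousSubmodule] at hph
    ext m
    rw [coeff_zero]
    rcases lt_or_ge m.degree n with hlt | hle
    · exact h hpI m hlt
    · exact hph.coeff_eq_zero (by omega)
  · rfl

lemma KD_eq_zero {I : Ideal (MvPolynomial σ k)} {i j : ℕ}
    (h : degComp I ((j : ℤ) - i) = ⊥) (x : KD I i j) : x = 0 := by
  funext S
  have hle : degComp I ((j : ℤ) - i) ≤ ⊥ := le_of_eq h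
  exact Subtype.ext ((Submodule.mem_bot k).mp (hle (x S).2))

end CMReg

namespace CMReg

variable {k : Type*} [Field k] {σ : Type*} [Fintype σ] [DecidableEq σ] [LinearOrder σ]

/-- The underlying polynomial value of `f` on a finset, with junk value `0`. -/
def KDval {I : Ideal (MvPolynomial σ k)} {i j : ℕ} (f : KD I i j) (T : Finset σ) :
    MvPolynomial σ k :=
  if h : T.card = i then (f ⟨T, h⟩ : MvPolynomial σ k) else 0

lemma KDval_of_card {I : Ideal (MvPolynomial σ k)} {i j : ℕ} (f : KD I i j) {T : Finset σ}
    (h : T.card = i) : KDval f T = (f ⟨T, h⟩ : MvPolynomial σ k) := dif_pos h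

lemma kdiff_apply_coe (I : Ideal (MvPolynomial σ k)) (i j : ℕ) (f : KD I (i+1) j)
    (S : {S : Finset σ // S.card = i}) :
    ((kdiff I i j f S : MvPolynomial σ k)) =
      ∑ x ∈ S.1ᶜ, ((-1 : k) ^ (S.1.filter (fun b => b < x)).card) •
        (X x * KDval f (insert x S.1)) := by
  rw [← Finset.sum_attach (S.1ᶜ) (fun x => ((-1 : k) ^ (S.1.filter (fun b => b < x)).card) •
        (X x * KDval f (insert x S.1)))]
  show ((∑ a ∈ S.1ᶜ.attach, _ : degComp I ((j : ℤ) - i)) : MvPolynomial σ k) = _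
  rw [AddSubmonoidClass.coe_finset_sum]
  refine Finset.sum_congr rfl fun a _ => ?_
  rw [SetLike.val_smul]
  congr 1
  rw [KDval_of_card f (by
    rw [Finset.card_insert_of_notMem (Finset.mem_compl.mp a.2), S.2])]

lemma sign_swap {S : Finset σ} {x y : σ} (hx : x ∉ S) (hy : y ∉ S) (hxy : x ≠ y) :
    ((-1:k) ^ (S.filter (fun b => b < x)).card) *
        ((-1:k) ^ ((insert x S).filter (fun b => b < y)).card)
      = -(((-1:k) ^ (S.filter (fun b => b < y)).card) *
        ((-1:k) ^ ((insert y S).filter (fun b => b < x)).card)) := by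
  rcases hxy.lt_or_gt with h | h
  · rw [Finset.filter_insert, if_pos h, Finset.filter_insert, if_neg (by simpa using asymm h),
      Finset.card_insert_of_notMem (fun hc => hx (Finset.mem_filter.mp hc).1), pow_succ]
    ring
  · rw [Finset.filter_insert, if_neg (by simpa using asymm h), Finset.filter_insert, if_pos h,
      Finset.card_insert_of_notMem (fun hc => hy (Finset.mem_filter.mp hc).1), pow_succ]
    ring

lemma kdiff_kdiff (I : Ideal (MvPolynomial σ k)) (i j : ℕ) (f : KD I (i+2) j) :
    kdiff I i j (kdiff I (i+1) j f) = 0 := by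
  funext S
  apply Subtype.ext
  rw [Pi.zero_apply]
  show ((kdiff I i j (kdiff I (i+1) j f) S : MvPolynomial σ k)) = ((0 : degComp I _) : _)
  rw [Submodule.coe_zero, kdiff_apply_coe]
  have hstep : ∀ x ∈ S.1ᶜ, ((-1:k) ^ (S.1.filter (fun b => b < x)).card) •
        (X x * KDval (kdiff I (i+1) j f) (insert x S.1))
      = ∑ y ∈ (insert x S.1)ᶜ,
          (((-1:k) ^ (S.1.filter (fun b => b < x)).card) *
            ((-1:k) ^ ((insert x S.1).filter (fun b => b < y)).card)) •
          (X x * (X y * KDval f (insert y (insert x S.1)))) := by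
    intro x hx
    have hc : (insert x S.1).card = i + 1 := by
      rw [Finset.card_insert_of_notMem (Finset.mem_compl.mp hx), S.2]
    rw [KDval_of_card _ hc, kdiff_apply_coe, Finset.mul_sum, Finset.smul_sum]
    refine Finset.sum_congr rfl fun y _ => ?_
    rw [mul_smul_comm, smul_smul]
  rw [Finset.sum_congr rfl hstep, Finset.sum_sigma']
  refine Finset.sum_involution (fun p _ => ⟨p.2, p.1⟩) ?_ ?_ ?_ ?_
  · intro p hp
    rw [Finset.mem_sigma] at hp
    obtain ⟨hx, hy⟩ := hp
    have hyi := Finset.mem_compl.mp hy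
    have hyS : p.2 ∉ S.1 := fun hc => hyi (Finset.mem_insert_of_mem hc)
    have hxy : p.1 ≠ p.2 := fun hc => hyi (hc ▸ Finset.mem_insert_self _ _)
    have hA : X p.2 * (X p.1 * KDval f (insert p.1 (insert p.2 S.1)))
        = X p.1 * (X p.2 * KDval f (insert p.2 (insert p.1 S.1))) := by
      rw [Finset.insert_comm]
      ring
    show _ + _ = (0 : MvPolynomial σ k)
    rw [sign_swap (Finset.mem_compl.mp hx) hyS hxy, hA, neg_smul, neg_add_cancel]
  · intro p hp h0 heq
    rw [Finset.mem_sigma] at hp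
    have hyi := Finset.mem_compl.mp hp.2
    exact hyi (congrArg Sigma.fst heq ▸ Finset.mem_insert_self _ _)
  · intro p hp
    rw [Finset.mem_sigma] at hp ⊢
    obtain ⟨hx, hy⟩ := hp
    have hyi := Finset.mem_compl.mp hy
    have hyS : p.2 ∉ S.1 := fun hc => hyi (Finset.mem_insert_of_mem hc)
    have hxy : p.1 ≠ p.2 := fun hc => hyi (hc ▸ Finset.mem_insert_self _ _)
    refine ⟨Finset.mem_compl.mpr hyS, Finset.mem_compl.mpr ?_⟩
    intro hc
    rcases Finset.mem_insert.mp hc with hc | hc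
    · exact hxy hc
    · exact Finset.mem_compl.mp hx hc
  · intro p hp
    rfl

/-- The map on Koszul strands induced by an inclusion of ideals. -/
def ιKD {I J : Ideal (MvPolynomial σ k)} (h : I ≤ J) (i j : ℕ) : KD I i j →ₗ[k] KD J i j where
  toFun f S := ⟨(f S : MvPolynomial σ k), degComp_mono h _ (f S).2⟩
  map_add' f g := by funext S; apply Subtype.ext; simp
  map_smul' c f := by funext S; apply Subtype.ext; simp

lemma ιKD_injective {I J : Ideal (MvPolynomial σ k)} (h : I ≤ J) (i j : ℕ) :
    Function.Injective (ιKD (k := k) h i j) := by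
  intro f g hfg
  funext S
  apply Subtype.ext
  exact congrArg (fun q => ((q S : degComp J ((j : ℤ) - i)) : MvPolynomial σ k)) hfg

lemma KDval_ιKD {I J : Ideal (MvPolynomial σ k)} (h : I ≤ J) {i j : ℕ} (f : KD I i j)
    (T : Finset σ) : KDval (ιKD h i j f) T = KDval f T := by
  unfold KDval
  split_ifs <;> rfl

lemma ιKD_kdiff {I J : Ideal (MvPolynomial σ k)} (h : I ≤ J) (i j : ℕ) (f : KD I (i+1) j) :
    kdiff J i j (ιKD h (i+1) j f) = ιKD h i j (kdiff I i j f) := by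
  funext S
  apply Subtype.ext
  show _ = ((kdiff I i j f S : MvPolynomial σ k))
  rw [kdiff_apply_coe, kdiff_apply_coe]
  refine Finset.sum_congr rfl fun x _ => ?_
  rw [KDval_ιKD]

end CMReg

namespace CMReg

variable {k : Type*} [Field k] {σ : Type*} [Fintype σ] [DecidableEq σ] [LinearOrder σ]

lemma le_add_left (U V : Ideal (MvPolynomial σ k)) : U ≤ U + V := by
  rw [Submodule.add_eq_sup]; exact le_sup_left

lemma le_add_right (U V : Ideal (MvPolynomial σ k)) : V ≤ U + V := by
  rw [Submodule.add_eq_sup]; exact le_sup_right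

/-- The comparison map `K(U) ⊕ K(V) → K(U+V)`, `(u,v) ↦ u - v`. -/
def ψmap (U V : Ideal (MvPolynomial σ k)) (i j : ℕ) :
    (KD U i j × KD V i j) →ₗ[k] KD (U + V) i j :=
  (ιKD (le_add_left U V) i j).comp (LinearMap.fst k _ _) -
    (ιKD (le_add_right U V) i j).comp (LinearMap.snd k _ _)

/-- The comparison map `K(U ⊓ V) → K(U) ⊕ K(V)`. -/
def φmap (U V : Ideal (MvPolynomial σ k)) (i j : ℕ) :
    KD (U ⊓ V) i j →ₗ[k] KD U i j × KD V i j :=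
  (ιKD inf_le_left i j).prod (ιKD inf_le_right i j)

lemma ψmap_apply_coe (U V : Ideal (MvPolynomial σ k)) (i j : ℕ)
    (x : KD U i j × KD V i j) (S : {S : Finset σ // S.card = i}) :
    ((ψmap U V i j x S : MvPolynomial σ k)) = (x.1 S : MvPolynomial σ k) - (x.2 S) := rfl

lemma φmap_apply_fst_coe (U V : Ideal (MvPolynomial σ k)) (i j : ℕ)
    (w : KD (U ⊓ V) i j) (S : {S : Finset σ // S.card = i}) :
    (((φmap U V i j w).1 S : MvPolynomial σ k)) = (w S : MvPolynomial σ k) := rfl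

lemma φmap_apply_snd_coe (U V : Ideal (MvPolynomial σ k)) (i j : ℕ)
    (w : KD (U ⊓ V) i j) (S : {S : Finset σ // S.card = i}) :
    (((φmap U V i j w).2 S : MvPolynomial σ k)) = (w S : MvPolynomial σ k) := rfl

lemma KDval_ψ (U V : Ideal (MvPolynomial σ k)) {i j : ℕ} (x : KD U i j × KD V i j)
    (T : Finset σ) : KDval (ψmap U V i j x) T = KDval x.1 T - KDval x.2 T := by
  unfold KDval
  split_ifs with h
  · exact ψmap_apply_coe U V i j x ⟨T, h⟩
  · rw [sub_zero]

lemma ψ_chain (U V : Ideal (MvPolynomial σ k)) (i j : ℕ) (x : KD U (i+1) j × KD V (i+1) j) :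
    kdiff (U + V) i j (ψmap U V (i+1) j x) =
      ψmap U V i j ((kdiff U i j).prodMap (kdiff V i j) x) := by
  funext S
  apply Subtype.ext
  rw [kdiff_apply_coe, ψmap_apply_coe]
  have h1 : (((kdiff U i j).prodMap (kdiff V i j) x).1 : KD U i j) = kdiff U i j x.1 := rfl
  have h2 : (((kdiff U i j).prodMap (kdiff V i j) x).2 : KD V i j) = kdiff V i j x.2 := rfl
  rw [h1, h2, kdiff_apply_coe, kdiff_apply_coe, ← Finset.sum_sub_distrib]
  refine Finset.sum_congr rfl fun a _ => ?_
  rw [KDval_ψ, mul_sub, smul_sub]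

lemma φ_chain (U V : Ideal (MvPolynomial σ k)) (i j : ℕ) (w : KD (U ⊓ V) (i+1) j) :
    (kdiff U i j).prodMap (kdiff V i j) (φmap U V (i+1) j w) =
      φmap U V i j (kdiff (U ⊓ V) i j w) := by
  rw [LinearMap.prodMap_apply]
  refine Prod.ext ?_ ?_
  · show kdiff U i j (ιKD (inf_le_left : U ⊓ V ≤ U) (i+1) j w) =
      ιKD (inf_le_left : U ⊓ V ≤ U) i j (kdiff (U ⊓ V) i j w)
    exact ιKD_kdiff _ i j w
  · show kdiff V i j (ιKD (inf_le_right : U ⊓ V ≤ V) (i+1) j w) =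
      ιKD (inf_le_right : U ⊓ V ≤ V) i j (kdiff (U ⊓ V) i j w)
    exact ιKD_kdiff _ i j w

lemma ψφ_zero (U V : Ideal (MvPolynomial σ k)) (i j : ℕ) (w : KD (U ⊓ V) i j) :
    ψmap U V i j (φmap U V i j w) = 0 := by
  funext S
  apply Subtype.ext
  have h0 : (((0 : KD (U + V) i j) S : MvPolynomial σ k)) = 0 := rfl
  show ((ψmap U V i j (φmap U V i j w)) S : MvPolynomial σ k) = _
  rw [Pi.zero_apply, Submodule.coe_zero, ψmap_apply_coe,
    φmap_apply_fst_coe, φmap_apply_snd_coe, sub_self]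

lemma ker_ψ (U V : Ideal (MvPolynomial σ k)) (i j : ℕ) :
    LinearMap.ker (ψmap U V i j) = LinearMap.range (φmap U V i j) := by
  ext x
  constructor
  · intro hx
    rw [LinearMap.mem_ker] at hx
    have hval : ∀ S, ((x.1 S : MvPolynomial σ k)) = (x.2 S : MvPolynomial σ k) := by
      intro S
      have h := congrArg (fun q => ((q S : degComp (U + V) ((j : ℤ) - i)) : MvPolynomial σ k)) hx
      simp only [ψmap_apply_coe] at h
      -- h : (x.1 S) - (x.2 S) = coe of (0 : KD) at S = 0
      have h0 : (((0 : KD (U + V) i j) S : MvPolynomial σ k)) = 0 := rfl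
      rw [h0] at h
      exact sub_eq_zero.mp h
    refine ⟨fun S => ⟨(x.1 S : MvPolynomial σ k), ?_⟩, ?_⟩
    · rw [degComp_inf]
      exact ⟨(x.1 S).2, hval S ▸ (x.2 S).2⟩
    · refine Prod.ext ?_ ?_
      · funext S; exact Subtype.ext rfl
      · funext S; exact Subtype.ext (hval S)
  · rintro ⟨w, rfl⟩
    exact LinearMap.mem_ker.mpr (ψφ_zero U V i j w)

lemma ψ_surj {U V : Ideal (MvPolynomial σ k)}
    (hUh : ∀ p ∈ U, ∀ n : ℕ, homogeneousComponent n p ∈ U)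
    (hVh : ∀ p ∈ V, ∀ n : ℕ, homogeneousComponent n p ∈ V) (i j : ℕ) :
    Function.Surjective (ψmap U V i j) := by
  intro f
  have hdeg : ∀ S : {S : Finset σ // S.card = i}, ∃ y ∈ degComp U ((j : ℤ) - i),
      ∃ z ∈ degComp V ((j : ℤ) - i), y - z = (f S : MvPolynomial σ k) := by
    intro S
    have hf := (f S).2
    by_cases h0 : 0 ≤ (j : ℤ) - i
    · unfold degComp at hf
      simp only [if_pos h0] at hf
      obtain ⟨hfI, hfh⟩ := Submodule.mem_inf.mp hf
      have hfI' : (f S : MvPolynomial σ k) ∈ U ⊔ V := by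
        rwa [← Submodule.add_eq_sup]
      obtain ⟨u, hu, v, hv, huv⟩ := Submodule.mem_sup.mp hfI'
      set d := ((j : ℤ) - i).toNat with hd
      refine ⟨homogeneousComponent d u, ?_, -(homogeneousComponent d v), ?_, ?_⟩
      · unfold degComp
        rw [if_pos h0]
        exact Submodule.mem_inf.mpr ⟨hUh u hu d, homogeneousComponent_mem d u⟩
      · unfold degComp
        rw [if_pos h0]
        exact Submodule.neg_mem _ (Submodule.mem_inf.mpr ⟨hVh v hv d, homogeneousComponent_mem d v⟩)
      · rw [sub_neg_eq_add, ← map_add, huv]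
        have hcc := homogeneousComponent_of_mem (m := d) hfh
        rw [hcc, if_pos rfl]
    · unfold degComp at hf
      simp only [if_neg h0] at hf
      refine ⟨0, Submodule.zero_mem _, 0, Submodule.zero_mem _, ?_⟩
      rw [Submodule.mem_bot] at hf
      rw [hf, sub_zero]
  choose y hy z hz hyz using hdeg
  refine ⟨(fun S => ⟨y S, hy S⟩, fun S => ⟨z S, hz S⟩), ?_⟩
  funext S
  exact Subtype.ext (hyz S)

lemma bettiNum_eq_zero_of_reg {T : Ideal (MvPolynomial σ k)} (h : reg T = 2) {r j : ℕ}
    (hj : r + 2 < j) : bettiNum T r j = 0 := by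
  by_contra hb
  have hmem : ((j - r : ℕ) : ℕ∞) ∈
      {d : ℕ∞ | ∃ i j : ℕ, bettiNum T i j ≠ 0 ∧ ((j - i : ℕ) : ℕ∞) = d} := ⟨r, j, hb, rfl⟩
  have hle : ((j - r : ℕ) : ℕ∞) ≤ 2 := h ▸ le_sSup hmem
  have h2 : (j - r : ℕ) ≤ 2 := by exact_mod_cast hle
  omega

lemma range_kdiff_le_cycles (T : Ideal (MvPolynomial σ k)) (r j : ℕ) :
    LinearMap.range (kdiff T r j) ≤ cyclesAt T r j := by
  cases r with
  | zero => exact le_top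
  | succ r' =>
    rintro x ⟨f, rfl⟩
    exact LinearMap.mem_ker.mpr (kdiff_kdiff T r' j f)

lemma cycles_eq_range_of_betti_zero {T : Ideal (MvPolynomial σ k)} {r j : ℕ}
    (hb : bettiNum T r j = 0) :
    cyclesAt T r j = LinearMap.range (kdiff T r j) := by
  exact (Submodule.eq_of_le_of_finrank_le (range_kdiff_le_cycles T r j)
    (Nat.le_of_sub_eq_zero hb)).symm

lemma map_cycles_le_range {W T : Ideal (MvPolynomial σ k)} (hWT : W ≤ T)
    (hreg : reg T = 2) (hT2 : T ≤ lowIdeal 2) (hW3 : W ≤ lowIdeal 3) (r j : ℕ) :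
    Submodule.map (ιKD hWT r j) (cyclesAt W r j) ≤ LinearMap.range (kdiff T r j) := by
  rcases lt_trichotomy j (r + 2) with hj | hj | hj
  · have hbot : degComp T ((j : ℤ) - r) = ⊥ :=
      degComp_eq_bot_of_low hT2 (by push_cast; omega)
    rintro x ⟨f, _, rfl⟩
    rw [KD_eq_zero hbot (ιKD hWT r j f)]
    exact Submodule.zero_mem _
  · have hbot : degComp (W : Ideal (MvPolynomial σ k)) ((j : ℤ) - r) = ⊥ :=
      degComp_eq_bot_of_low hW3 (by push_cast; omega)
    rintro x ⟨f, _, rfl⟩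
    rw [KD_eq_zero hbot f, map_zero]
    exact Submodule.zero_mem _
  · rw [← cycles_eq_range_of_betti_zero (bettiNum_eq_zero_of_reg hreg hj)]
    rintro x ⟨f, hf, rfl⟩
    cases r with
    | zero => exact Submodule.mem_top
    | succ r' =>
      show ιKD hWT (r'+1) j f ∈ LinearMap.ker (kdiff T r' j)
      rw [LinearMap.mem_ker, ιKD_kdiff]
      have hz : kdiff W r' j f = 0 := hf
      rw [hz, map_zero]

end CMReg

namespace CMReg

variable {k : Type*} [Field k] {σ : Type*} [Fintype σ] [DecidableEq σ] [LinearOrder σ]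

section Master

variable {U V : Ideal (MvPolynomial σ k)}

set_option maxHeartbeats 1000000 in
lemma finrank_cyclesAt_zero (T : Ideal (MvPolynomial σ k)) (j : ℕ) :
    Module.finrank k (cyclesAt T 0 j) = Module.finrank k (KD T 0 j) := by
  rw [show cyclesAt T 0 j = ⊤ from rfl]
  exact finrank_top k (KD T 0 j)

lemma φ_injective (i j : ℕ) : Function.Injective (φmap U V i j) := fun w w' h =>
  ιKD_injective (inf_le_left : U ⊓ V ≤ U) i j (congrArg Prod.fst h)

lemma dA_dA (i j : ℕ) (y : KD U (i+2) j × KD V (i+2) j) :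
    (kdiff U i j).prodMap (kdiff V i j) ((kdiff U (i+1) j).prodMap (kdiff V (i+1) j) y) = 0 := by
  rw [LinearMap.prodMap_apply, LinearMap.prodMap_apply]
  exact Prod.ext (kdiff_kdiff U i j y.1) (kdiff_kdiff V i j y.2)

lemma mem_cycles_of_φ_mem (i j : ℕ) (w : KD (U ⊓ V) i j)
    (h : φmap U V i j w ∈ LinearMap.range ((kdiff U i j).prodMap (kdiff V i j))) :
    w ∈ cyclesAt (U ⊓ V) i j := by
  cases i with
  | zero => exact Submodule.mem_top
  | succ i' =>
    obtain ⟨y, hy⟩ := h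
    show w ∈ LinearMap.ker (kdiff (U ⊓ V) i' j)
    rw [LinearMap.mem_ker]
    apply φ_injective i' j
    rw [map_zero, ← φ_chain U V i' j w, ← hy]
    exact dA_dA i' j y

lemma φ_cycles_le_range_dA (hregU : reg U = 2) (hregV : reg V = 2)
    (hU2 : U ≤ lowIdeal 2) (hV2 : V ≤ lowIdeal 2) (hW3 : U ⊓ V ≤ lowIdeal 3) (r j : ℕ) :
    Submodule.map (φmap U V r j) (cyclesAt (U ⊓ V) r j) ≤
      LinearMap.range ((kdiff U r j).prodMap (kdiff V r j)) := by
  rw [CMRegAux.range_prodMap]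
  rintro x ⟨w, hw, rfl⟩
  refine Submodule.mem_prod.mpr ⟨?_, ?_⟩
  · exact map_cycles_le_range inf_le_left hregU hU2 hW3 r j ⟨w, hw, rfl⟩
  · exact map_cycles_le_range inf_le_right hregV hV2 hW3 r j ⟨w, hw, rfl⟩

lemma count_Z (hUh : ∀ p ∈ U, ∀ n : ℕ, homogeneousComponent n p ∈ U)
    (hVh : ∀ p ∈ V, ∀ n : ℕ, homogeneousComponent n p ∈ V)
    (hregU : reg U = 2) (hregV : reg V = 2)
    (hU2 : U ≤ lowIdeal 2) (hV2 : V ≤ lowIdeal 2) (hW3 : U ⊓ V ≤ lowIdeal 3) (i j : ℕ) :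
    Module.finrank k (LinearMap.ker (kdiff (U + V) i j))
        + Module.finrank k (KD (U ⊓ V) (i+1) j)
      = Module.finrank k (LinearMap.ker ((kdiff U i j).prodMap (kdiff V i j)))
        + Module.finrank k (cyclesAt (U ⊓ V) i j) := by
  classical
  have ha := CMRegAux.finrank_map_add_inf_ker (ψmap U V (i+1) j)
    (Submodule.comap (ψmap U V (i+1) j) (LinearMap.ker (kdiff (U + V) i j)))
  have hmap : (Submodule.comap (ψmap U V (i+1) j)
        (LinearMap.ker (kdiff (U + V) i j))).map (ψmap U V (i+1) j)
      = LinearMap.ker (kdiff (U + V) i j) :=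
    Submodule.map_comap_eq_of_surjective (ψ_surj hUh hVh (i+1) j) _
  have hker_le : LinearMap.ker (ψmap U V (i+1) j) ≤
      Submodule.comap (ψmap U V (i+1) j) (LinearMap.ker (kdiff (U + V) i j)) := by
    intro x hx
    rw [Submodule.mem_comap, LinearMap.mem_ker.mp hx]
    exact Submodule.zero_mem _
  have hinf : Submodule.comap (ψmap U V (i+1) j) (LinearMap.ker (kdiff (U + V) i j))
      ⊓ LinearMap.ker (ψmap U V (i+1) j) = LinearMap.ker (ψmap U V (i+1) j) :=
    inf_eq_right.mpr hker_le
  have hb := CMRegAux.finrank_map_add_inf_ker ((kdiff U i j).prodMap (kdiff V i j))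
    (Submodule.comap (ψmap U V (i+1) j) (LinearMap.ker (kdiff (U + V) i j)))
  have hkerdA_le : LinearMap.ker ((kdiff U i j).prodMap (kdiff V i j)) ≤
      Submodule.comap (ψmap U V (i+1) j) (LinearMap.ker (kdiff (U + V) i j)) := by
    intro x hx
    rw [Submodule.mem_comap, LinearMap.mem_ker, ψ_chain U V i j x, LinearMap.mem_ker.mp hx]
    exact map_zero _
  have hinf2 : Submodule.comap (ψmap U V (i+1) j) (LinearMap.ker (kdiff (U + V) i j))
      ⊓ LinearMap.ker ((kdiff U i j).prodMap (kdiff V i j))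
      = LinearMap.ker ((kdiff U i j).prodMap (kdiff V i j)) := inf_eq_right.mpr hkerdA_le
  have hmapd : (Submodule.comap (ψmap U V (i+1) j)
        (LinearMap.ker (kdiff (U + V) i j))).map ((kdiff U i j).prodMap (kdiff V i j))
      = (cyclesAt (U ⊓ V) i j).map (φmap U V i j) := by
    apply le_antisymm
    · rintro _ ⟨y, hy, rfl⟩
      have hyk : kdiff (U + V) i j (ψmap U V (i+1) j y) = 0 :=
        LinearMap.mem_ker.mp (Submodule.mem_comap.mp hy)
      have hmem : (kdiff U i j).prodMap (kdiff V i j) y ∈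
          LinearMap.range (φmap U V i j) := by
        rw [← ker_ψ U V i j, LinearMap.mem_ker, ← ψ_chain U V i j y]
        exact hyk
      obtain ⟨w, hw⟩ := hmem
      exact ⟨w, mem_cycles_of_φ_mem i j w (hw ▸ ⟨y, rfl⟩), hw⟩
    · rintro _ ⟨w, hw, rfl⟩
      obtain ⟨y, hy⟩ := φ_cycles_le_range_dA hregU hregV hU2 hV2 hW3 i j
        (Submodule.mem_map_of_mem hw)
      refine Submodule.mem_map.mpr ⟨y, ?_, hy⟩
      rw [Submodule.mem_comap, LinearMap.mem_ker, ψ_chain U V i j y, hy]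
      exact ψφ_zero U V i j w
  have hkψ : Module.finrank k (LinearMap.ker (ψmap U V (i+1) j))
      = Module.finrank k (KD (U ⊓ V) (i+1) j) := by
    rw [ker_ψ]
    exact CMRegAux.finrank_range_of_injective (φmap U V (i+1) j) (φ_injective (i+1) j)
  have hfφ : Module.finrank k ((cyclesAt (U ⊓ V) i j).map (φmap U V i j))
      = Module.finrank k (cyclesAt (U ⊓ V) i j) :=
    CMRegAux.finrank_map_of_injective (φmap U V i j) (φ_injective i j) _
  rw [hmap, hinf] at ha
  rw [hmapd, hinf2] at hb
  omega

lemma count_B (hUh : ∀ p ∈ U, ∀ n : ℕ, homogeneousComponent n p ∈ U)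
    (hVh : ∀ p ∈ V, ∀ n : ℕ, homogeneousComponent n p ∈ V)
    (hregU : reg U = 2) (hregV : reg V = 2)
    (hU2 : U ≤ lowIdeal 2) (hV2 : V ≤ lowIdeal 2) (hW3 : U ⊓ V ≤ lowIdeal 3) (r j : ℕ) :
    Module.finrank k (LinearMap.range ((kdiff U r j).prodMap (kdiff V r j)))
      = Module.finrank k (LinearMap.range (kdiff (U + V) r j))
        + Module.finrank k (cyclesAt (U ⊓ V) r j) := by
  have hcomp : (kdiff (U + V) r j).comp (ψmap U V (r+1) j)
      = (ψmap U V r j).comp ((kdiff U r j).prodMap (kdiff V r j)) :=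
    LinearMap.ext (ψ_chain U V r j)
  have h1 : LinearMap.range (kdiff (U + V) r j)
      = (LinearMap.range ((kdiff U r j).prodMap (kdiff V r j))).map (ψmap U V r j) := by
    rw [← LinearMap.range_comp_of_range_eq_top (kdiff (U + V) r j)
      (LinearMap.range_eq_top.mpr (ψ_surj hUh hVh (r+1) j)), hcomp, LinearMap.range_comp]
  have h2 := CMRegAux.finrank_map_add_inf_ker (ψmap U V r j)
    (LinearMap.range ((kdiff U r j).prodMap (kdiff V r j)))
  have h3 : LinearMap.range ((kdiff U r j).prodMap (kdiff V r j))
        ⊓ LinearMap.ker (ψmap U V r j)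
      = (cyclesAt (U ⊓ V) r j).map (φmap U V r j) := by
    apply le_antisymm
    · intro x hx
      obtain ⟨hxB, hxK⟩ := Submodule.mem_inf.mp hx
      rw [ker_ψ] at hxK
      obtain ⟨w, hw⟩ := hxK
      exact ⟨w, mem_cycles_of_φ_mem r j w (hw ▸ hxB), hw⟩
    · intro x hx
      refine Submodule.mem_inf.mpr
        ⟨φ_cycles_le_range_dA hregU hregV hU2 hV2 hW3 r j hx, ?_⟩
      obtain ⟨w, hw, rfl⟩ := hx
      exact LinearMap.mem_ker.mpr (ψφ_zero U V r j w)
  have h4 : Module.finrank k ((cyclesAt (U ⊓ V) r j).map (φmap U V r j))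
      = Module.finrank k (cyclesAt (U ⊓ V) r j) :=
    CMRegAux.finrank_map_of_injective (φmap U V r j) (φ_injective r j) _
  rw [h3, h4] at h2
  rw [h1, ← h2]

lemma rank_nullity_kdiff (T : Ideal (MvPolynomial σ k)) (r j : ℕ) :
    Module.finrank k (KD T (r+1) j)
      = Module.finrank k (cyclesAt T (r+1) j)
        + Module.finrank k (LinearMap.range (kdiff T r j)) := by
  have h := LinearMap.finrank_range_add_finrank_ker (kdiff T r j)
  have hc : Module.finrank k (cyclesAt T (r+1) j)
      = Module.finrank k (LinearMap.ker (kdiff T r j)) := rfl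
  omega

lemma count_zero (hUh : ∀ p ∈ U, ∀ n : ℕ, homogeneousComponent n p ∈ U)
    (hVh : ∀ p ∈ V, ∀ n : ℕ, homogeneousComponent n p ∈ V) (j : ℕ) :
    Module.finrank k (KD (U + V) 0 j) + Module.finrank k (KD (U ⊓ V) 0 j)
      = Module.finrank k (KD U 0 j) + Module.finrank k (KD V 0 j) := by
  have h := LinearMap.finrank_range_add_finrank_ker (ψmap U V 0 j)
  rw [LinearMap.range_eq_top.mpr (ψ_surj hUh hVh 0 j), finrank_top] at h
  have hk : Module.finrank k (LinearMap.ker (ψmap U V 0 j))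
      = Module.finrank k (KD (U ⊓ V) 0 j) := by
    rw [ker_ψ]
    exact CMRegAux.finrank_range_of_injective (φmap U V 0 j) (φ_injective 0 j)
  have hp : Module.finrank k (KD U 0 j × KD V 0 j)
      = Module.finrank k (KD U 0 j) + Module.finrank k (KD V 0 j) := Module.finrank_prod
  omega

set_option maxHeartbeats 2000000 in
theorem betti_split_master (hUh : ∀ p ∈ U, ∀ n : ℕ, homogeneousComponent n p ∈ U)
    (hVh : ∀ p ∈ V, ∀ n : ℕ, homogeneousComponent n p ∈ V)
    (hregU : reg U = 2) (hregV : reg V = 2)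
    (hU2 : U ≤ lowIdeal 2) (hV2 : V ≤ lowIdeal 2) (hW3 : U ⊓ V ≤ lowIdeal 3) :
    (∀ i j : ℕ, bettiNum (U + V) (i+1) j
        = bettiNum U (i+1) j + bettiNum V (i+1) j + bettiNum (U ⊓ V) i j)
    ∧ (∀ j : ℕ, bettiNum (U + V) 0 j = bettiNum U 0 j + bettiNum V 0 j) := by
  constructor
  · intro i j
    have e1 := count_Z hUh hVh hregU hregV hU2 hV2 hW3 i j
    have e2 := count_B hUh hVh hregU hregV hU2 hV2 hW3 (i+1) j
    have e3 := rank_nullity_kdiff (U ⊓ V) i j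
    have e4 : Module.finrank k (LinearMap.ker ((kdiff U i j).prodMap (kdiff V i j)))
        = Module.finrank k (cyclesAt U (i+1) j) + Module.finrank k (cyclesAt V (i+1) j) := by
      rw [LinearMap.ker_prodMap, CMRegAux.finrank_prod_sub]
      rfl
    have e5 : Module.finrank k (LinearMap.range ((kdiff U (i+1) j).prodMap (kdiff V (i+1) j)))
        = Module.finrank k (LinearMap.range (kdiff U (i+1) j))
          + Module.finrank k (LinearMap.range (kdiff V (i+1) j)) := by
      rw [CMRegAux.range_prodMap, CMRegAux.finrank_prod_sub]
    have b1 : Module.finrank k (cyclesAt (U + V) (i+1) j)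
        = Module.finrank k (LinearMap.ker (kdiff (U + V) i j)) := rfl
    have i1 : Module.finrank k (LinearMap.range (kdiff (U + V) (i+1) j))
        ≤ Module.finrank k (cyclesAt (U + V) (i+1) j) :=
      Submodule.finrank_mono (range_kdiff_le_cycles _ _ _)
    have i2 : Module.finrank k (LinearMap.range (kdiff U (i+1) j))
        ≤ Module.finrank k (cyclesAt U (i+1) j) :=
      Submodule.finrank_mono (range_kdiff_le_cycles _ _ _)
    have i3 : Module.finrank k (LinearMap.range (kdiff V (i+1) j))
        ≤ Module.finrank k (cyclesAt V (i+1) j) :=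
      Submodule.finrank_mono (range_kdiff_le_cycles _ _ _)
    have i4 : Module.finrank k (LinearMap.range (kdiff (U ⊓ V) i j))
        ≤ Module.finrank k (cyclesAt (U ⊓ V) i j) :=
      Submodule.finrank_mono (range_kdiff_le_cycles _ _ _)
    unfold bettiNum
    omega
  · intro j
    have e1 := count_zero hUh hVh j
    have e2 := count_B hUh hVh hregU hregV hU2 hV2 hW3 0 j
    have e5 : Module.finrank k (LinearMap.range ((kdiff U 0 j).prodMap (kdiff V 0 j)))
        = Module.finrank k (LinearMap.range (kdiff U 0 j))
          + Module.finrank k (LinearMap.range (kdiff V 0 j)) := by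
      rw [CMRegAux.range_prodMap, CMRegAux.finrank_prod_sub]
    have b1 : Module.finrank k (cyclesAt (U + V) 0 j) = Module.finrank k (KD (U + V) 0 j) := by
      exact finrank_cyclesAt_zero (U + V) j
    have b2 : Module.finrank k (cyclesAt U 0 j) = Module.finrank k (KD U 0 j) := by
      exact finrank_cyclesAt_zero U j
    have b3 : Module.finrank k (cyclesAt V 0 j) = Module.finrank k (KD V 0 j) := by
      exact finrank_cyclesAt_zero V j
    have b4 : Module.finrank k (cyclesAt (U ⊓ V) 0 j)
        = Module.finrank k (KD (U ⊓ V) 0 j) := by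
      exact finrank_cyclesAt_zero (U ⊓ V) j
    have i1 : Module.finrank k (LinearMap.range (kdiff (U + V) 0 j))
        ≤ Module.finrank k (KD (U + V) 0 j) := Submodule.finrank_le _
    have i2 : Module.finrank k (LinearMap.range (kdiff U 0 j))
        ≤ Module.finrank k (KD U 0 j) := Submodule.finrank_le _
    have i3 : Module.finrank k (LinearMap.range (kdiff V 0 j))
        ≤ Module.finrank k (KD V 0 j) := Submodule.finrank_le _
    unfold bettiNum
    omega

end Master

end CMReg

/-- `M` is an induced matching of `G`: a set of pairwise vertex-disjoint edges of `G` such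
that the only edges of `G` between vertices covered by `M` are the edges of `M` themselves. -/
def SimpleGraph.IsInducedMatching {V : Type*} (G : SimpleGraph V) (M : Finset (Sym2 V)) : Prop :=
  (↑M : Set (Sym2 V)) ⊆ G.edgeSet ∧
  (∀ e ∈ M, ∀ f ∈ M, e ≠ f → ∀ u : V, u ∈ e → u ∉ f) ∧
  (∀ u v : V, (∃ e ∈ M, u ∈ e) → (∃ f ∈ M, v ∈ f) → G.Adj u v → s(u, v) ∈ M)

/-- The induced matching number of `G`: the largest size of an induced matching. -/
noncomputable def SimpleGraph.inducedMatchingNumber {V : Type*} (G : SimpleGraph V) : ℕ :=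
  sSup {n : ℕ | ∃ M : Finset (Sym2 V), G.IsInducedMatching M ∧ M.card = n}

/-- The edge ideal of a graph `G`: the ideal of `k[x_v : v ∈ V]` generated by the products
`x_u x_v` over the edges `{u, v}` of `G`. -/
def edgeIdeal (k : Type*) [Field k] {V : Type*} (G : SimpleGraph V) :
    Ideal (MvPolynomial V k) :=
  Ideal.span {p | ∃ u v : V, G.Adj u v ∧ p = MvPolynomial.X u * MvPolynomial.X v}


section EdgeFacts

open CMReg

variable {k : Type*} [Field k] {V : Type*} [Fintype V] [DecidableEq V] [LinearOrder V]

lemma edgeIdeal_le_low (G : SimpleGraph V) : edgeIdeal k G ≤ CMReg.lowIdeal 2 := by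
  rw [edgeIdeal, Ideal.span_le]
  rintro x ⟨u, v, huv, rfl⟩
  intro m hm
  rw [MvPolynomial.coeff_mul]
  refine Finset.sum_eq_zero fun y hy => ?_
  rw [MvPolynomial.coeff_X', MvPolynomial.coeff_X']
  split_ifs with h1 h2
  · exfalso
    have hmeq : m = Finsupp.single u 1 + Finsupp.single v 1 := by
      rw [← Finset.HasAntidiagonal.mem_antidiagonal.mp hy, ← h1, ← h2]
    rw [hmeq, CMReg.degree_add', CMReg.degree_single', CMReg.degree_single'] at hm
    omega
  all_goals simp

lemma hc_mem_of_span_homog {s : Set (MvPolynomial V k)}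
    (hs : ∀ x ∈ s, ∃ m : ℕ, x ∈ homogeneousSubmodule V k m) :
    ∀ p ∈ Ideal.span s, ∀ n : ℕ, homogeneousComponent n p ∈ Ideal.span s := by
  intro p hp
  refine Submodule.span_induction ?_ ?_ ?_ ?_ hp
  · intro x hx n
    obtain ⟨m, hm⟩ := hs x hx
    rw [homogeneousComponent_of_mem hm]
    split_ifs
    · exact Ideal.subset_span hx
    · exact Ideal.zero_mem _
  · intro n
    rw [map_zero]
    exact Ideal.zero_mem _
  · intro x y hx hy hx' hy' n
    rw [map_add]
    exact Ideal.add_mem _ (hx' n) (hy' n)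
  · intro a x hx hx' n
    rw [smul_eq_mul]
    have hax : a * x = ∑ e ∈ Finset.range (a.totalDegree + 1), homogeneousComponent e a * x := by
      rw [← Finset.sum_mul, sum_homogeneousComponent]
    rw [hax, map_sum]
    refine Submodule.sum_mem _ fun e _ => ?_
    have hx2 : (homogeneousComponent e a) * x
        = ∑ e' ∈ Finset.range (x.totalDegree + 1),
            homogeneousComponent e a * homogeneousComponent e' x := by
      rw [← Finset.mul_sum, sum_homogeneousComponent]
    rw [hx2, map_sum]
    refine Submodule.sum_mem _ fun e' _ => ?_
    have hhom : (homogeneousComponent e a * homogeneousComponent e' x)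
        ∈ homogeneousSubmodule V k (e + e') :=
      (mem_homogeneousSubmodule _ _).mpr
        ((homogeneousComponent_isHomogeneous e a).mul (homogeneousComponent_isHomogeneous e' x))
    rw [homogeneousComponent_of_mem hhom]
    split_ifs
    · exact Ideal.mul_mem_left _ _ (hx' e')
    · exact Ideal.zero_mem _

lemma edgeIdeal_hc (G : SimpleGraph V) :
    ∀ p ∈ edgeIdeal k G, ∀ n : ℕ, homogeneousComponent n p ∈ edgeIdeal k G := by
  refine hc_mem_of_span_homog ?_
  rintro x ⟨u, v, huv, rfl⟩
  exact ⟨2, (mem_homogeneousSubmodule _ _).mpr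
    ((isHomogeneous_X k u).mul (isHomogeneous_X k v))⟩

end EdgeFacts

/-- If `I(G) = U + V` where `U, V` are edge ideals of subgraphs of `G` having
2-linear resolutions (i.e. `reg U = reg V = 2`; edge ideals are generated in degree 2), and
`U ∩ V ⊆ m·U`, `U ∩ V ⊆ m·V` for the graded maximal ideal `m`, then `I(G) = U + V` is a Betti
splitting: `β_{i,j}(I(G)) = β_{i,j}(U) + β_{i,j}(V) + β_{i-1,j}(U ∩ V)` for all `i, j`
(with `β_{-1,j} = 0`). -/
theorem betti_splitting_of_linear {k : Type*} [Field k] {V : Type*}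
    [Fintype V] [DecidableEq V] [LinearOrder V] (G G₁ G₂ : SimpleGraph V)
    (h₁ : G₁ ≤ G) (h₂ : G₂ ≤ G)
    (hsum : edgeIdeal k G = edgeIdeal k G₁ + edgeIdeal k G₂)
    (hU : CMReg.reg (edgeIdeal k G₁) = (2 : ℕ∞))
    (hV : CMReg.reg (edgeIdeal k G₂) = (2 : ℕ∞))
    (hUm : edgeIdeal k G₁ ⊓ edgeIdeal k G₂ ≤
      Ideal.span (Set.range (MvPolynomial.X : V → MvPolynomial V k)) * edgeIdeal k G₁)
    (hVm : edgeIdeal k G₁ ⊓ edgeIdeal k G₂ ≤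
      Ideal.span (Set.range (MvPolynomial.X : V → MvPolynomial V k)) * edgeIdeal k G₂) :
    (∀ i j : ℕ, CMReg.bettiNum (edgeIdeal k G) (i + 1) j =
        CMReg.bettiNum (edgeIdeal k G₁) (i + 1) j + CMReg.bettiNum (edgeIdeal k G₂) (i + 1) j +
          CMReg.bettiNum (edgeIdeal k G₁ ⊓ edgeIdeal k G₂) i j) ∧
    (∀ j : ℕ, CMReg.bettiNum (edgeIdeal k G) 0 j =
        CMReg.bettiNum (edgeIdeal k G₁) 0 j + CMReg.bettiNum (edgeIdeal k G₂) 0 j) := by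
  have hW3 : edgeIdeal k G₁ ⊓ edgeIdeal k G₂ ≤ CMReg.lowIdeal 3 :=
    le_trans hUm (le_trans
      (Ideal.mul_mono CMReg.span_X_le_lowIdeal (edgeIdeal_le_low G₁))
      (CMReg.lowIdeal_mul_le 1 2))
  rw [hsum]
  exact CMReg.betti_split_master (edgeIdeal_hc G₁) (edgeIdeal_hc G₂) hU hV
    (edgeIdeal_le_low G₁) (edgeIdeal_le_low G₂) hW3
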